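/- Consider the plasma insulin dynamics İ(t) = −n·(I(t) + I_b) + u(t)/V on t ≥ 0 with n ∈ [n̲, n̄] for positive constants n̲ ≤ n̄, and I(t) + I_b ≥ 0 for all t. Let Î be a differentiable estimate signal with |I(t) − Î(t)| ≤ Δ_I and |İ(t) − d/dt Î(t)| ≤ Δ̇_I for all t. Let I_ref be a differentiable reference with 0 ≤ I_ref(t) ≤ κ₂ and |İ_ref(t)| ≤ M_I for all t, let ρ_I(t) = (p_I − q_I)e^{−μ_I t} + q_I be the funnel with 0 < q_I < p_I and μ_I > 0, define the normalized error e_I(t) = (I_ref(t) − Î(t))/ρ_I(t), and set the control u(t) = ū·Ψ(e_I(t)). Suppose |e_I(0)| < 1 and the feasibility conditions hold: (FC3a) ū/V − n̄(κ₂ − q_I + Δ_I + I_b) > M_I + μ_I(p_I − q_I) + Δ̇_I; (FC3b) n̲(q_I − Δ_I + I_b) > M_I + μ_I(p_I − q_I) + Δ̇_I. Then |I_ref(t) − Î(t)| < ρ_I(t) for all t ≥ 0. -/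

import Mathlib

open Filter Set Topology

lemma aux_deriv_neg {f : ℝ → ℝ} {c x : ℝ} (hf : HasDerivAt f c x)
    (hc : c < 0) (hfx : f x = 0) (hx : 0 < x) :
    ∃ t, 0 < t ∧ t < x ∧ 0 < f t := by
  have hs : Tendsto (slope f x) (𝓝[≠] x) (𝓝 c) :=
    hasDerivAt_iff_tendsto_slope.mp hf
  have h1 : ∀ᶠ t in 𝓝[≠] x, slope f x t < 0 := hs.eventually (eventually_lt_nhds hc)
  have h1' : ∀ᶠ t in 𝓝[<] x, slope f x t < 0 :=
    h1.filter_mono (nhdsWithin_mono x fun t ht => ne_of_lt ht)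
  have h2 : ∀ᶠ t in 𝓝[<] x, t ∈ Ioo 0 x :=
    eventually_of_mem (Ioo_mem_nhdsLT_of_mem ⟨hx, le_refl x⟩) fun t ht => ht
  obtain ⟨t, hslope, ht0, htx⟩ := (h1'.and h2).exists
  refine ⟨t, ht0, htx, ?_⟩
  rw [slope_def_field, hfx, sub_zero] at hslope
  rcases div_neg_iff.mp hslope with ⟨h, _⟩ | ⟨_, h⟩
  · exact h
  · linarith [sub_neg.mpr htx]

lemma aux_deriv_pos {f : ℝ → ℝ} {c x : ℝ} (hf : HasDerivAt f c x)
    (hc : 0 < c) (hfx : f x = 0) (hx : 0 < x) :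
    ∃ t, 0 < t ∧ t < x ∧ f t < 0 := by
  obtain ⟨t, h1, h2, h3⟩ := aux_deriv_neg hf.neg (neg_neg_iff_pos.mpr hc)
    (by simp [hfx]) hx
  exact ⟨t, h1, h2, by simp only [Pi.neg_apply] at h3; linarith⟩



/-- **Stage I of the proof of Theorem 1: invariance of the plasma-insulin
funnel.** For the plasma insulin dynamics `İ = −n(I + I_b) + u/V` with the
control `u(t) = ū·Ψ(e_I(t))`, bounded estimation errors, and feasibility
conditions FC3a–FC3b, the tracking error `I_ref − Î` stays strictly inside the
funnel `ρ_I` for all `t ≥ 0`. -/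
theorem stageI_plasma_insulin_funnel_invariance
    -- the bounded transformation function Ψ
    (Ψ : ℝ → ℝ)
    (hΨC1 : ContDiff ℝ 1 Ψ)
    (hΨmono : Monotone Ψ)
    (hΨ0 : ∀ s ≤ (0 : ℝ), Ψ s = 0)
    (hΨ1 : ∀ s ≥ (1 : ℝ), Ψ s = 1)
    (hΨrange : ∀ s, 0 ≤ Ψ s ∧ Ψ s ≤ 1)
    -- parameters
    (n nlow nbar V I_b κ₂ ubar Δ_I Δ'_I M_I : ℝ)
    (hnlow : 0 < nlow) (hn : nlow ≤ n ∧ n ≤ nbar)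
    (hV : 0 < V) (hIb : 0 < I_b) (hκ₂ : 0 < κ₂) (hubar : 0 < ubar)
    (hΔI : 0 < Δ_I) (hΔ'I : 0 < Δ'_I) (hMI : 0 < M_I)
    -- funnel parameters
    (p_I q_I μ_I : ℝ) (hqI : 0 < q_I) (hpI : q_I < p_I) (hμI : 0 < μ_I)
    -- signals and definitions
    (I Ihat Ihat' Iref Iref' : ℝ → ℝ)
    (ρI : ℝ → ℝ) (hρIdef : ∀ t, ρI t = (p_I - q_I) * Real.exp (-μ_I * t) + q_I)
    (eI : ℝ → ℝ) (heI : ∀ t, eI t = (Iref t - Ihat t) / ρI t)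
    (u : ℝ → ℝ) (hudef : ∀ t, u t = ubar * Ψ (eI t))
    -- plasma insulin dynamics on t ≥ 0, with I + I_b ≥ 0
    (hdynI : ∀ t ≥ (0 : ℝ), HasDerivAt I (-(n * (I t + I_b)) + u t / V) t)
    (hIpos : ∀ t ≥ (0 : ℝ), 0 ≤ I t + I_b)
    -- estimate: differentiable with bounded position/derivative errors
    (hIhat : ∀ t ≥ (0 : ℝ), HasDerivAt Ihat (Ihat' t) t)
    (hIerr : ∀ t ≥ (0 : ℝ), |I t - Ihat t| ≤ Δ_I)
    (hIerr' : ∀ t ≥ (0 : ℝ), |(-(n * (I t + I_b)) + u t / V) - Ihat' t| ≤ Δ'_I)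
    -- reference: differentiable, bounded, with bounded derivative
    (hIrefrange : ∀ t ≥ (0 : ℝ), 0 ≤ Iref t ∧ Iref t ≤ κ₂)
    (hIref' : ∀ t ≥ (0 : ℝ), HasDerivAt Iref (Iref' t) t)
    (hIrefbnd : ∀ t ≥ (0 : ℝ), |Iref' t| ≤ M_I)
    -- initial condition
    (hinitI : |eI 0| < 1)
    -- feasibility conditions
    (hFC3a : ubar / V - nbar * (κ₂ - q_I + Δ_I + I_b)
        > M_I + μ_I * (p_I - q_I) + Δ'_I)
    (hFC3b : nlow * (q_I - Δ_I + I_b) > M_I + μ_I * (p_I - q_I) + Δ'_I) :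
    ∀ t ≥ (0 : ℝ), |Iref t - Ihat t| < ρI t := by

  have hpq : 0 < p_I - q_I := sub_pos.mpr hpI
  have hρpos : ∀ t, 0 < ρI t := by
    intro t; rw [hρIdef]; positivity
  have hρq : ∀ t, q_I ≤ ρI t := by
    intro t; rw [hρIdef]; nlinarith [Real.exp_pos (-μ_I * t)]
  have hρderiv : ∀ t, HasDerivAt ρI (-((p_I - q_I) * μ_I * Real.exp (-μ_I * t))) t := by
    intro t
    have hfun : ρI = fun s => (p_I - q_I) * Real.exp (-μ_I * s) + q_I := funext hρIdef
    rw [hfun]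
    have h1 : HasDerivAt (fun s : ℝ => -μ_I * s) (-μ_I) t := by
      simpa using (hasDerivAt_id t).const_mul (-μ_I)
    have h2 := (Real.hasDerivAt_exp (-μ_I * t)).comp t h1
    have h3 := (h2.const_mul (p_I - q_I)).add_const q_I
    convert h3 using 1
    · rfl
    · rfl
    · rfl
    · ring
  -- initial condition
  have hy0 : |Iref 0 - Ihat 0| < ρI 0 := by
    have := hinitI
    rw [heI, abs_div, abs_of_pos (hρpos 0), div_lt_one (hρpos 0)] at this
    exact this
  by_contra hcon
  push_neg at hcon
  obtain ⟨t₀, ht₀0, ht₀⟩ := hcon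
  set S : Set ℝ := {t | 0 ≤ t ∧ ρI t ≤ |Iref t - Ihat t|} with hS
  have hne : S.Nonempty := ⟨t₀, ht₀0, ht₀⟩
  have hbdd : BddBelow S := ⟨0, fun t ht => ht.1⟩
  set τ := sInf S with hτdef
  have hτ0 : 0 ≤ τ := le_csInf hne fun t ht => ht.1
  have hτlb : ∀ t ∈ S, τ ≤ t := fun t ht => csInf_le hbdd ht
  have hnotS : ∀ t, 0 < t → t < τ → |Iref t - Ihat t| < ρI t := by
    intro t h1 h2
    by_contra h; push_neg at h
    exact absurd (hτlb t ⟨h1.le, h⟩) (not_le.mpr h2)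
  have hτcl : τ ∈ closure S := csInf_mem_closure hne hbdd
  have hgc : ContinuousAt (fun t => |Iref t - Ihat t| - ρI t) τ := by
    have h1 : ContinuousAt Ihat τ := (hIhat τ hτ0).continuousAt
    have h2 : ContinuousAt Iref τ := (hIref' τ hτ0).continuousAt
    have h3 : ContinuousAt ρI τ := (hρderiv τ).continuousAt
    exact ((h2.sub h1).abs).sub h3
  have hmem : ρI τ ≤ |Iref τ - Ihat τ| := by
    have hnb : (𝓝[S] τ).NeBot := mem_closure_iff_nhdsWithin_neBot.mp hτcl
    have htd : Tendsto (fun t => |Iref t - Ihat t| - ρI t) (𝓝[S] τ)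
        (𝓝 (|Iref τ - Ihat τ| - ρI τ)) := hgc.tendsto.mono_left nhdsWithin_le_nhds
    have hev : ∀ᶠ t in 𝓝[S] τ, 0 ≤ |Iref t - Ihat t| - ρI t :=
      eventually_nhdsWithin_of_forall fun t ht => sub_nonneg.mpr ht.2
    linarith [ge_of_tendsto htd hev]
  have hτpos : 0 < τ := by
    rcases hτ0.lt_or_eq with h | h
    · exact h
    · exfalso; rw [← h] at hmem; linarith
  have heq : Iref τ - Ihat τ = ρI τ ∨ Iref τ - Ihat τ = -(ρI τ) := by
    have habs : |Iref τ - Ihat τ| = ρI τ := by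
      rcases hmem.lt_or_eq with hlt | he
      · exfalso
        have hgpos : 0 < |Iref τ - Ihat τ| - ρI τ := sub_pos.mpr hlt
        have hev : ∀ᶠ t in 𝓝 τ, 0 < |Iref t - Ihat t| - ρI t :=
          hgc.eventually (eventually_gt_nhds hgpos)
        have hev' : ∀ᶠ t in 𝓝[<] τ, 0 < |Iref t - Ihat t| - ρI t :=
          hev.filter_mono nhdsWithin_le_nhds
        have h2 : ∀ᶠ t in 𝓝[<] τ, t ∈ Ioo 0 τ :=
          eventually_of_mem (Ioo_mem_nhdsLT_of_mem ⟨hτpos, le_refl τ⟩) fun t ht => ht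
        obtain ⟨t, hgt, ht0, htτ⟩ := (hev'.and h2).exists
        exact absurd (hnotS t ht0 htτ) (not_lt.mpr (by linarith))
      · exact he.symm
    exact abs_eq (hρpos τ).le |>.mp habs
  have hexp1 : Real.exp (-μ_I * τ) ≤ 1 := Real.exp_le_one_iff.mpr (by nlinarith)
  have hexppos : 0 < Real.exp (-μ_I * τ) := Real.exp_pos _
  have hmul : (p_I - q_I) * μ_I * Real.exp (-μ_I * τ) ≤ (p_I - q_I) * μ_I :=
    mul_le_of_le_one_right (by positivity) hexp1
  have hIref'bd := abs_le.mp (hIrefbnd τ hτ0)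
  have hIerrbd := abs_le.mp (hIerr τ hτ0)
  have hIerr'bd := abs_le.mp (hIerr' τ hτ0)
  have hIrr := hIrefrange τ hτ0
  have hIposτ := hIpos τ hτ0
  rcases heq with hcase | hcase
  · -- upper boundary: e_I = 1, u = ubar
    have heIτ : eI τ = 1 := by rw [heI, hcase, div_self (hρpos τ).ne']
    have huτ : u τ = ubar := by rw [hudef, heIτ, hΨ1 1 le_rfl, mul_one]
    rw [huτ] at hIerr'bd
    have hIle : I τ ≤ κ₂ - q_I + Δ_I := by
      have h2 : Ihat τ = Iref τ - ρI τ := by linarith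
      have h4 := hρq τ
      linarith [hIerrbd.2, hIrr.2]
    have hnI : n * (I τ + I_b) ≤ nbar * (κ₂ - q_I + Δ_I + I_b) := by
      nlinarith [hn.1, hn.2, hnlow]
    have hyd : HasDerivAt (fun t => Iref t - Ihat t - ρI t)
        (Iref' τ - Ihat' τ - -((p_I - q_I) * μ_I * Real.exp (-μ_I * τ))) τ :=
      ((hIref' τ hτ0).sub (hIhat τ hτ0)).sub (hρderiv τ)
    have hc : Iref' τ - Ihat' τ - -((p_I - q_I) * μ_I * Real.exp (-μ_I * τ)) < 0 := by
      have hIhat'ge : ubar / V - n * (I τ + I_b) - Δ'_I ≤ Ihat' τ := by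
        linarith [hIerr'bd.1]
      linarith [hIref'bd.2, hnI, hIhat'ge, hFC3a, hmul]
    obtain ⟨t, ht0, htτ, htpos⟩ := aux_deriv_neg hyd hc (by linarith) hτpos
    have : ρI t < |Iref t - Ihat t| := lt_of_lt_of_le (by linarith) (le_abs_self _)
    exact absurd (hnotS t ht0 htτ) (not_lt.mpr this.le)
  · -- lower boundary: e_I = -1, u = 0
    have heIτ : eI τ = -1 := by
      rw [heI, hcase, neg_div, div_self (hρpos τ).ne']
    have huτ : u τ = 0 := by
      rw [hudef, heIτ, hΨ0 (-1) (by norm_num), mul_zero]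
    rw [huτ] at hIerr'bd
    have hIge : q_I - Δ_I ≤ I τ := by
      have h2 : Ihat τ = Iref τ + ρI τ := by linarith
      have h4 := hρq τ
      linarith [hIerrbd.1, hIrr.1]
    have hqd : 0 < q_I - Δ_I + I_b := by
      have hm : 0 < μ_I * (p_I - q_I) := mul_pos hμI hpq
      have h1 : 0 < nlow * (q_I - Δ_I + I_b) := by linarith
      rcases mul_pos_iff.mp h1 with ⟨_, h⟩ | ⟨h, _⟩
      · exact h
      · linarith
    have hnI : nlow * (q_I - Δ_I + I_b) ≤ n * (I τ + I_b) :=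
      le_trans (mul_le_mul_of_nonneg_left (by linarith) hnlow.le)
        (mul_le_mul_of_nonneg_right hn.1 hIposτ)
    have hyd : HasDerivAt (fun t => Iref t - Ihat t + ρI t)
        (Iref' τ - Ihat' τ + -((p_I - q_I) * μ_I * Real.exp (-μ_I * τ))) τ :=
      ((hIref' τ hτ0).sub (hIhat τ hτ0)).add (hρderiv τ)
    have hc : 0 < Iref' τ - Ihat' τ + -((p_I - q_I) * μ_I * Real.exp (-μ_I * τ)) := by
      have hIhat'le : Ihat' τ ≤ -(n * (I τ + I_b)) + 0 / V + Δ'_I := by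
        linarith [hIerr'bd.2]
      rw [zero_div] at hIhat'le
      linarith [hIref'bd.1, hnI, hIhat'le, hFC3b, hmul]
    obtain ⟨t, ht0, htτ, htneg⟩ := aux_deriv_pos hyd hc (by linarith) hτpos
    have : ρI t < |Iref t - Ihat t| := lt_of_lt_of_le (by linarith) (neg_le_abs _)
    exact absurd (hnotS t ht0 htτ) (not_lt.mpr this.le)
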